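/- Fix positive integers k, T, T', U and reals ε, δ, α ≥ 0, β ∈ [0,1]. If there exists an (ε,δ)-DP algorithm (under item-level neighbors) for time-window freq≥k in the bundle setting on datasets with time horizon ⌈T/T'⌉ over universe [U] having (α,β)-utility, then there exists an (ε,δ)-DP algorithm (under item-level neighbors) for time-window freq≥k in the singleton setting on datasets with time horizon T over universe [U] having (α + T', β)-utility. -/

import Mathlib

open Finset

/-- `(ε, δ)`-differential privacy of a randomized algorithm `M`
with respect to the neighboring relation `neighbor`. -/
def IsDP {I O : Type} (neighbor : I → I → Prop) (M : I → PMF O) (ε δ : ℝ) : Prop :=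
  ∀ D D', neighbor D D' → ∀ s : Set O,
    (M D).toOuterMeasure s ≤
      ENNReal.ofReal (Real.exp ε) * (M D').toOuterMeasure s + ENNReal.ofReal δ

/-- `(α, β)`-utility: for every input and every query, with probability at least
`1 - β` the output estimate is within `α` of the true value. -/
def HasUtility {I Q : Type} (M : I → PMF (Q → ℝ)) (val : I → Q → ℝ) (α β : ℝ) : Prop :=
  ∀ D q, ENNReal.ofReal (1 - β) ≤ (M D).toOuterMeasure {o | |o q - val D q| ≤ α}

/-- A dataset with time horizon `T` over universe `[U]`:
`S t u` is the multiplicity of item `u` at (0-indexed) time step `t`. -/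
abbrev Dataset (T U : ℕ) : Type := Fin T → Fin U → ℕ

/-- `S^{[t₁, t₂]}_u` with 1-indexed times: total multiplicity of item `u`
during time steps `t₁, ..., t₂`. -/
def winCount {T U : ℕ} (S : Dataset T U) (t₁ t₂ : ℕ) (u : Fin U) : ℕ :=
  ∑ t : Fin T, if t₁ ≤ (t : ℕ) + 1 ∧ (t : ℕ) + 1 ≤ t₂ then S t u else 0

/-- `freq≥k(S^{[t₁,t₂]})`: the number of items occurring at least `k` times. -/
def freqGe {T U : ℕ} (k : ℕ) (S : Dataset T U) (t₁ t₂ : ℕ) : ℕ :=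
  (Finset.univ.filter fun u : Fin U => k ≤ winCount S t₁ t₂ u).card

/-- `freq=k(S^{[t₁,t₂]})`: the number of items occurring exactly `k` times. -/
def freqEq {T U : ℕ} (k : ℕ) (S : Dataset T U) (t₁ t₂ : ℕ) : ℕ :=
  (Finset.univ.filter fun u : Fin U => winCount S t₁ t₂ u = k).card

/-- Item-level neighbors: the datasets agree on all items except possibly one. -/
def ItemNeighbor {T U : ℕ} (S S' : Dataset T U) : Prop :=
  ∃ u : Fin U, ∀ u' : Fin U, u' ≠ u → ∀ t : Fin T, S t u' = S' t u'

/-- Event-level neighbors: the total (absolute) difference of multiplicities is at most 1. -/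
def EventNeighbor {T U : ℕ} (S S' : Dataset T U) : Prop :=
  (∑ t : Fin T, ∑ u : Fin U, ((S t u : ℤ) - (S' t u : ℤ)).natAbs) ≤ 1

/-- Singleton setting: at most one item arrives at each time step. -/
def IsSingleton {T U : ℕ} (S : Dataset T U) : Prop :=
  ∀ t : Fin T, (∑ u : Fin U, S t u) ≤ 1

/-- Cumulative `freq≥k` queries: the query indexed by `t : Fin T` is
`freq≥k(S^{[1, t+1]})`. -/
def cumVal (k : ℕ) {T U : ℕ} (S : Dataset T U) (t : Fin T) : ℝ :=
  (freqGe k S 1 ((t : ℕ) + 1) : ℝ)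

/-- Time-window `freq≥k` queries: the query indexed by a pair `t₁ ≤ t₂` (0-indexed)
is `freq≥k(S^{[t₁+1, t₂+1]})`. -/
def twVal (k : ℕ) {T U : ℕ} (S : Dataset T U)
    (p : {p : Fin T × Fin T // p.1 ≤ p.2}) : ℝ :=
  (freqGe k S ((p.1.1 : ℕ) + 1) ((p.1.2 : ℕ) + 1) : ℝ)

/-- Time-window `freq=k` queries. -/
def twValEq (k : ℕ) {T U : ℕ} (S : Dataset T U)
    (p : {p : Fin T × Fin T // p.1 ≤ p.2}) : ℝ :=
  (freqEq k S ((p.1.1 : ℕ) + 1) ((p.1.2 : ℕ) + 1) : ℝ)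

/-- Fixed-window `freq≥k` queries with window `W`: the query indexed by
`i : Fin (T - W + 1)` is `freq≥k(S^{[i+1, i+W]})`. -/
def fwVal (k W : ℕ) {T U : ℕ} (S : Dataset T U) (i : Fin (T - W + 1)) : ℝ :=
  (freqGe k S ((i : ℕ) + 1) ((i : ℕ) + W) : ℝ)

/-- Neighboring inputs for range-query-type problems: they differ by adding
or removing a single point. -/
def AddRemoveNeighbor {P : Type} (D D' : Multiset P) : Prop :=
  ∃ x : P, D' = x ::ₘ D ∨ D = x ::ₘ D'

/-- 1d-range queries over a linearly ordered finite domain `Fin M`: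
the query indexed by `y₁ ≤ y₂` counts the points in `[y₁, y₂]`. -/
def range1Val {M : ℕ} (D : Multiset (Fin M))
    (p : {p : Fin M × Fin M // p.1 ≤ p.2}) : ℝ :=
  ((D.filter fun x => p.1.1 ≤ x ∧ x ≤ p.1.2).card : ℝ)

/-- 2d-range queries over the domain `Fin M × Fin M`: the query indexed by a pair
`(y¹, y²)` counts the points `x` with `y¹ ⪯ x ⪯ y²` coordinatewise. -/
def range2Val {M : ℕ} (D : Multiset (Fin M × Fin M))
    (p : (Fin M × Fin M) × (Fin M × Fin M)) : ℝ :=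
  ((D.filter fun x =>
      p.1.1 ≤ x.1 ∧ p.1.2 ≤ x.2 ∧ x.1 ≤ p.2.1 ∧ x.2 ≤ p.2.2).card : ℝ)

/-- Neighboring inputs for the linear query problem: they differ
in a single coordinate. -/
def CoordNeighbor {m : ℕ} (x x' : Fin m → Bool) : Prop :=
  ∃ u : Fin m, ∀ u' : Fin m, u' ≠ u → x u' = x' u'

/-- The `A`-linear queries: the query indexed by `i : Fin d` is `(A x)_i`. -/
def linVal {d m : ℕ} (A : Fin d → Fin m → Bool) (x : Fin m → Bool) (i : Fin d) : ℝ :=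
  ((∑ u : Fin m, if A i u && x u then 1 else 0 : ℕ) : ℝ)

/-- The 1-way marginal queries: the query indexed by `i : Fin d` is the `i`-th
coordinate of the sum of the input vectors. -/
def margVal {d : ℕ} (D : Multiset (Fin d → Bool)) (i : Fin d) : ℝ :=
  (((D.map fun x => if x i then (1 : ℕ) else 0).sum : ℕ) : ℝ)


section TimeCompressionAux

/-- Compress a dataset by summing blocks of `T'` consecutive time steps. -/
def compressD (T' T₁ : ℕ) {T U : ℕ} (S : Dataset T U) : Dataset T₁ U :=
  fun s u => ∑ t : Fin T, if (t : ℕ) / T' = (s : ℕ) then S t u else 0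

lemma compressD_neighbor {T U : ℕ} (T' T₁ : ℕ) {S S' : Dataset T U}
    (h : ItemNeighbor S S') : ItemNeighbor (compressD T' T₁ S) (compressD T' T₁ S') := by
  obtain ⟨u, hu⟩ := h
  exact ⟨u, fun u' hu' s => Finset.sum_congr rfl fun t _ => by
    simp only [hu u' hu' t]⟩

lemma winCount_compressD {T U : ℕ} {T' T₁ : ℕ} (S : Dataset T U)
    (hcov : ∀ t : Fin T, (t : ℕ) / T' < T₁) (s₁ s₂ : ℕ) (u : Fin U) :
    winCount (compressD T' T₁ S) (s₁ + 1) (s₂ + 1) u =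
      ∑ t : Fin T, if s₁ ≤ (t : ℕ) / T' ∧ (t : ℕ) / T' ≤ s₂ then S t u else 0 := by
  unfold winCount compressD
  calc (∑ s : Fin T₁, if s₁ + 1 ≤ (s : ℕ) + 1 ∧ (s : ℕ) + 1 ≤ s₂ + 1 then
          (∑ t : Fin T, if (t : ℕ) / T' = (s : ℕ) then S t u else 0) else 0)
      = ∑ s : Fin T₁, ∑ t : Fin T,
          if (s₁ ≤ (s : ℕ) ∧ (s : ℕ) ≤ s₂) ∧ (t : ℕ) / T' = (s : ℕ) then S t u else 0 := by
        refine Finset.sum_congr rfl fun s _ => ?_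
        by_cases h : s₁ ≤ (s : ℕ) ∧ (s : ℕ) ≤ s₂
        · rw [if_pos (by omega)]
          exact Finset.sum_congr rfl fun t _ => by simp [h]
        · rw [if_neg (by omega)]
          refine (Finset.sum_eq_zero fun t _ => ?_).symm
          rw [if_neg (by tauto)]
    _ = ∑ t : Fin T, ∑ s : Fin T₁,
          if (s₁ ≤ (s : ℕ) ∧ (s : ℕ) ≤ s₂) ∧ (t : ℕ) / T' = (s : ℕ) then S t u else 0 :=
        Finset.sum_comm
    _ = ∑ t : Fin T, if s₁ ≤ (t : ℕ) / T' ∧ (t : ℕ) / T' ≤ s₂ then S t u else 0 := by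
        refine Finset.sum_congr rfl fun t _ => ?_
        rw [Finset.sum_eq_single (⟨(t : ℕ) / T', hcov t⟩ : Fin T₁)]
        · simp
        · intro s _ hs
          refine if_neg fun h => hs (Fin.ext h.2.symm)
        · simp

lemma sum_swap_ite {T U : ℕ} (S : Dataset T U) (P : ℕ → Prop) [DecidablePred P] :
    (∑ u : Fin U, ∑ t : Fin T, if P (t : ℕ) then S t u else 0) =
      ∑ t : Fin T, if P (t : ℕ) then (∑ u : Fin U, S t u) else 0 := by
  rw [Finset.sum_comm]
  exact Finset.sum_congr rfl fun t _ => by split_ifs <;> simp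

lemma sum_window_le {T U : ℕ} (S : Dataset T U) (hs : IsSingleton S) (a b : ℕ) :
    (∑ t : Fin T, if a ≤ (t : ℕ) ∧ (t : ℕ) < b then (∑ u : Fin U, S t u) else 0) ≤ b - a := by
  calc (∑ t : Fin T, if a ≤ (t : ℕ) ∧ (t : ℕ) < b then (∑ u : Fin U, S t u) else 0)
      ≤ ∑ t : Fin T, if a ≤ (t : ℕ) ∧ (t : ℕ) < b then 1 else 0 := by
        refine Finset.sum_le_sum fun t _ => ?_
        split_ifs
        · exact hs t
        · exact le_rfl
    _ = (Finset.univ.filter fun t : Fin T => a ≤ (t : ℕ) ∧ (t : ℕ) < b).card := by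
        simp [Finset.sum_ite, Finset.sum_const]
    _ ≤ (Finset.Ico a b).card := by
        refine Finset.card_le_card_of_injOn (fun t => (t : ℕ)) ?_ ?_
        · intro t ht
          simp only [Finset.mem_coe, Finset.mem_filter, Finset.mem_univ, true_and] at ht
          simp [Finset.mem_Ico, ht.1, ht.2]
        · intro x _ y _ h
          exact Fin.ext h
    _ = b - a := Nat.card_Ico a b

lemma card_le_sum {U : ℕ} (P : Fin U → Prop) [DecidablePred P] (f : Fin U → ℕ)
    (h : ∀ u, P u → 1 ≤ f u) :
    (Finset.univ.filter P).card ≤ ∑ u : Fin U, f u := by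
  calc (Finset.univ.filter P).card = ∑ u ∈ Finset.univ.filter P, 1 := by simp
    _ ≤ ∑ u ∈ Finset.univ.filter P, f u := by
        refine Finset.sum_le_sum fun u hu => ?_
        exact h u (Finset.mem_filter.mp hu).2
    _ ≤ ∑ u : Fin U, f u := Finset.sum_le_sum_of_subset (Finset.filter_subset _ _)

lemma winCount_eq {T U : ℕ} (S : Dataset T U) (t₁ t₂ : ℕ) (u : Fin U) :
    winCount S (t₁ + 1) (t₂ + 1) u =
      ∑ t : Fin T, if t₁ ≤ (t : ℕ) ∧ (t : ℕ) < t₂ + 1 then S t u else 0 :=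
  Finset.sum_congr rfl fun t _ => if_congr (by omega) rfl rfl

lemma freqGe_le_window {T U k : ℕ} (hk : 0 < k) (S : Dataset T U) (hs : IsSingleton S)
    (t₁ t₂ : ℕ) : freqGe k S (t₁ + 1) (t₂ + 1) ≤ t₂ + 1 - t₁ := by
  unfold freqGe
  calc (Finset.univ.filter fun u : Fin U => k ≤ winCount S (t₁+1) (t₂+1) u).card
      ≤ ∑ u : Fin U, winCount S (t₁+1) (t₂+1) u :=
        card_le_sum _ _ fun u hu => le_trans hk hu
    _ = ∑ t : Fin T, if t₁ ≤ (t : ℕ) ∧ (t : ℕ) < t₂ + 1 then (∑ u : Fin U, S t u) else 0 := by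
        rw [← sum_swap_ite S (fun n => t₁ ≤ n ∧ n < t₂ + 1)]
        exact Finset.sum_congr rfl fun u _ => winCount_eq S t₁ t₂ u
    _ ≤ t₂ + 1 - t₁ := sum_window_le S hs t₁ (t₂ + 1)

lemma freq_diff {T U T' T₁ k : ℕ} (hT' : 0 < T') (S : Dataset T U) (hs : IsSingleton S)
    (hcov : ∀ t : Fin T, (t : ℕ) / T' < T₁) (t₁ t₂ : ℕ)
    (hC : t₁ / T' + 1 ≤ (t₂ + 1) / T') :
    |(freqGe k (compressD T' T₁ S) (t₁ / T' + 1) ((t₂ + 1) / T' - 1 + 1) : ℝ)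
      - (freqGe k S (t₁ + 1) (t₂ + 1) : ℝ)| ≤ (T' : ℝ) := by
  set s₁ := t₁ / T' with hs₁
  set e := (t₂ + 1) / T' with he
  have hd1 : s₁ * T' + t₁ % T' = t₁ := by rw [hs₁, mul_comm]; exact Nat.div_add_mod t₁ T'
  have hm1 : t₁ % T' < T' := Nat.mod_lt t₁ hT'
  have hd2 : e * T' + (t₂ + 1) % T' = t₂ + 1 := by
    rw [he, mul_comm]; exact Nat.div_add_mod (t₂ + 1) T'
  have hm2 : (t₂ + 1) % T' < T' := Nat.mod_lt (t₂ + 1) hT'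
  have hse : s₁ * T' + T' ≤ e * T' := by
    have h := Nat.mul_le_mul_right T' hC
    rw [add_mul, one_mul] at h
    exact h
  -- rewritten window counts
  have hwC : ∀ u, winCount (compressD T' T₁ S) (s₁ + 1) (e - 1 + 1) u =
      ∑ t : Fin T, if s₁ * T' ≤ (t : ℕ) ∧ (t : ℕ) < e * T' then S t u else 0 := by
    intro u
    rw [winCount_compressD S hcov]
    refine Finset.sum_congr rfl fun t _ => if_congr ?_ rfl rfl
    rw [Nat.le_div_iff_mul_le hT']
    have h1e : 1 ≤ e := le_trans (Nat.le_add_left 1 s₁) hC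
    constructor
    · rintro ⟨h1, h2⟩
      refine ⟨h1, (Nat.div_lt_iff_lt_mul hT').mp ?_⟩
      exact lt_of_le_of_lt h2 (Nat.sub_lt h1e one_pos)
    · rintro ⟨h1, h2⟩
      rw [← Nat.div_lt_iff_lt_mul hT'] at h2
      exact ⟨h1, Nat.le_sub_one_of_lt h2⟩
  -- predicates
  set pC := fun u : Fin U => k ≤ winCount (compressD T' T₁ S) (s₁ + 1) (e - 1 + 1) u with hpC
  set pO := fun u : Fin U => k ≤ winCount S (t₁ + 1) (t₂ + 1) u with hpO
  set aP := fun u : Fin U =>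
    ∑ t : Fin T, if s₁ * T' ≤ (t : ℕ) ∧ (t : ℕ) < t₁ then S t u else 0 with haP
  set bP := fun u : Fin U =>
    ∑ t : Fin T, if e * T' ≤ (t : ℕ) ∧ (t : ℕ) < t₂ + 1 then S t u else 0 with hbP
  have key : ∀ u, winCount (compressD T' T₁ S) (s₁ + 1) (e - 1 + 1) u + bP u =
      winCount S (t₁ + 1) (t₂ + 1) u + aP u := by
    intro u
    rw [hwC, winCount_eq, haP, hbP, ← Finset.sum_add_distrib, ← Finset.sum_add_distrib]
    refine Finset.sum_congr rfl fun t _ => ?_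
    split_ifs <;> omega
  have hUp : (Finset.univ.filter fun u => pC u ∧ ¬ pO u).card ≤ T' := by
    calc (Finset.univ.filter fun u => pC u ∧ ¬ pO u).card ≤ ∑ u : Fin U, aP u := by
          refine card_le_sum _ _ fun u hu => ?_
          have := key u
          simp only [hpC, hpO, not_le] at hu
          omega
      _ = ∑ t : Fin T, if s₁ * T' ≤ (t : ℕ) ∧ (t : ℕ) < t₁ then (∑ u : Fin U, S t u) else 0 :=
          sum_swap_ite S (fun n => s₁ * T' ≤ n ∧ n < t₁)
      _ ≤ t₁ - s₁ * T' := sum_window_le S hs _ _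
      _ ≤ T' := by omega
  have hDn : (Finset.univ.filter fun u => pO u ∧ ¬ pC u).card ≤ T' := by
    calc (Finset.univ.filter fun u => pO u ∧ ¬ pC u).card ≤ ∑ u : Fin U, bP u := by
          refine card_le_sum _ _ fun u hu => ?_
          have := key u
          simp only [hpC, hpO, not_le] at hu
          omega
      _ = ∑ t : Fin T, if e * T' ≤ (t : ℕ) ∧ (t : ℕ) < t₂ + 1 then (∑ u : Fin U, S t u) else 0 :=
          sum_swap_ite S (fun n => e * T' ≤ n ∧ n < t₂ + 1)
      _ ≤ t₂ + 1 - e * T' := sum_window_le S hs _ _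
      _ ≤ T' := by omega
  have h1 : freqGe k (compressD T' T₁ S) (s₁ + 1) (e - 1 + 1) =
      (Finset.univ.filter fun u => pC u ∧ pO u).card
        + (Finset.univ.filter fun u => pC u ∧ ¬ pO u).card := by
    rw [show freqGe k (compressD T' T₁ S) (s₁ + 1) (e - 1 + 1)
        = (Finset.univ.filter pC).card from rfl,
      ← Finset.filter_filter, ← Finset.filter_filter,
      Finset.card_filter_add_card_filter_not]
  have hBoth : (Finset.univ.filter fun u => pC u ∧ pO u)
      = (Finset.univ.filter fun u => pO u ∧ pC u) :=
    Finset.filter_congr fun u _ => and_comm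
  have h2 : freqGe k S (t₁ + 1) (t₂ + 1) =
      (Finset.univ.filter fun u => pO u ∧ pC u).card
        + (Finset.univ.filter fun u => pO u ∧ ¬ pC u).card := by
    rw [show freqGe k S (t₁ + 1) (t₂ + 1) = (Finset.univ.filter pO).card from rfl,
      ← Finset.filter_filter, ← Finset.filter_filter,
      Finset.card_filter_add_card_filter_not]
  rw [abs_sub_le_iff]
  rw [hBoth] at h1
  constructor <;> rw [sub_le_iff_le_add]
  · exact_mod_cast (by omega :
      freqGe k (compressD T' T₁ S) (s₁ + 1) (e - 1 + 1) ≤ T' + freqGe k S (t₁ + 1) (t₂ + 1))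
  · exact_mod_cast (by omega :
      freqGe k S (t₁ + 1) (t₂ + 1) ≤ T' + freqGe k (compressD T' T₁ S) (s₁ + 1) (e - 1 + 1))

end TimeCompressionAux

/-- time compression: an `(ε, δ)`-DP item-level algorithm for
time-window `freq≥k` in the bundle setting on horizon `⌈T/T'⌉` yields an
`(ε, δ)`-DP item-level algorithm for time-window `freq≥k` in the singleton
setting on horizon `T` with `(α + T', β)`-utility. -/
theorem time_window_singleton_from_bundle (k T T' U : ℕ)
    (hk : 0 < k) (hT : 0 < T) (hT' : 0 < T') (hU : 0 < U)
    (ε δ α β : ℝ) (hε : 0 ≤ ε) (hδ : 0 ≤ δ) (hα : 0 ≤ α) (hβ0 : 0 ≤ β) (hβ1 : β ≤ 1)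
    (h : ∃ M₁ : Dataset ((T + T' - 1) / T') U →
        PMF ({p : Fin ((T + T' - 1) / T') × Fin ((T + T' - 1) / T') // p.1 ≤ p.2} → ℝ),
      IsDP ItemNeighbor M₁ ε δ ∧ HasUtility M₁ (twVal k) α β) :
    ∃ M₂ : {S : Dataset T U // IsSingleton S} →
        PMF ({p : Fin T × Fin T // p.1 ≤ p.2} → ℝ),
      IsDP (fun S S' => ItemNeighbor S.1 S'.1) M₂ ε δ ∧
      HasUtility M₂ (fun S => twVal k S.1) (α + (T' : ℝ)) β := by
  classical
  obtain ⟨M₁, hDP₁, hUt₁⟩ := h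
  have hcov : ∀ t : Fin T, (t : ℕ) / T' < (T + T' - 1) / T' := by
    intro t
    have h1 : (t : ℕ) / T' ≤ (T - 1) / T' := Nat.div_le_div_right (by omega)
    have h2 : (T - 1 + T') / T' = (T - 1) / T' + 1 := Nat.add_div_right _ hT'
    have h3 : T + T' - 1 = T - 1 + T' := by omega
    rw [h3]
    omega
  have hT₁ : 0 < (T + T' - 1) / T' :=
    Nat.lt_of_le_of_lt (Nat.zero_le _) (hcov ⟨0, hT⟩)
  have hbound : ∀ p : {p : Fin T × Fin T // p.1 ≤ p.2},
      (p.1.1 : ℕ) / T' + 1 ≤ ((p.1.2 : ℕ) + 1) / T' →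
      ((p.1.2 : ℕ) + 1) / T' - 1 < (T + T' - 1) / T' := by
    intro p hCp
    have h1 : ((p.1.2 : ℕ) + 1) / T' ≤ (T + T' - 1) / T' :=
      Nat.div_le_div_right (by have := p.1.2.isLt; omega)
    omega
  set g : ({p : Fin ((T + T' - 1) / T') × Fin ((T + T' - 1) / T') // p.1 ≤ p.2} → ℝ) →
      ({p : Fin T × Fin T // p.1 ≤ p.2} → ℝ) := fun o p =>
    if hCp : (p.1.1 : ℕ) / T' + 1 ≤ ((p.1.2 : ℕ) + 1) / T' then
      o ⟨(⟨(p.1.1 : ℕ) / T', hcov p.1.1⟩,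
          ⟨((p.1.2 : ℕ) + 1) / T' - 1, hbound p hCp⟩),
        Fin.mk_le_mk.mpr (by omega)⟩
    else 0 with hg
  refine ⟨fun D => (M₁ (compressD T' ((T + T' - 1) / T') D.1)).map g, ?_, ?_⟩
  · intro D D' hn s
    rw [PMF.toOuterMeasure_map_apply, PMF.toOuterMeasure_map_apply]
    exact hDP₁ _ _ (compressD_neighbor _ _ hn) _
  · intro D p
    rw [PMF.toOuterMeasure_map_apply]
    set X := compressD T' ((T + T' - 1) / T') D.1 with hX
    by_cases hCp : (p.1.1 : ℕ) / T' + 1 ≤ ((p.1.2 : ℕ) + 1) / T'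
    · refine le_trans (hUt₁ X ⟨(⟨(p.1.1 : ℕ) / T', hcov p.1.1⟩,
          ⟨((p.1.2 : ℕ) + 1) / T' - 1, hbound p hCp⟩), Fin.mk_le_mk.mpr (by omega)⟩)
        ((M₁ X).toOuterMeasure.mono ?_)
      intro o ho
      simp only [Set.mem_setOf_eq] at ho ⊢
      show |g o p - twVal k D.1 p| ≤ α + (T' : ℝ)
      rw [hg]
      simp only []
      rw [dif_pos hCp]
      have hfd := freq_diff (k := k) hT' D.1 D.2 hcov (p.1.1 : ℕ) (p.1.2 : ℕ) hCp
      have htri := abs_sub_le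
        (o ⟨(⟨(p.1.1 : ℕ) / T', hcov p.1.1⟩,
          ⟨((p.1.2 : ℕ) + 1) / T' - 1, hbound p hCp⟩), Fin.mk_le_mk.mpr (by omega)⟩)
        ((freqGe k X ((p.1.1 : ℕ) / T' + 1) (((p.1.2 : ℕ) + 1) / T' - 1 + 1) : ℝ))
        ((freqGe k D.1 ((p.1.1 : ℕ) + 1) ((p.1.2 : ℕ) + 1) : ℝ))
      have hval : twVal k X ⟨(⟨(p.1.1 : ℕ) / T', hcov p.1.1⟩,
          ⟨((p.1.2 : ℕ) + 1) / T' - 1, hbound p hCp⟩), Fin.mk_le_mk.mpr (by omega)⟩ =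
          (freqGe k X ((p.1.1 : ℕ) / T' + 1) (((p.1.2 : ℕ) + 1) / T' - 1 + 1) : ℝ) := rfl
      have hval2 : twVal k D.1 p =
          (freqGe k D.1 ((p.1.1 : ℕ) + 1) ((p.1.2 : ℕ) + 1) : ℝ) := rfl
      rw [hval] at ho
      rw [hval2]
      rw [← hX] at hfd
      linarith [htri, ho, hfd]
    · refine le_trans (hUt₁ X ⟨(⟨0, hT₁⟩, ⟨0, hT₁⟩), le_refl _⟩)
        ((M₁ X).toOuterMeasure.mono ?_)
      intro o _
      simp only [Set.mem_setOf_eq]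
      show |g o p - twVal k D.1 p| ≤ α + (T' : ℝ)
      rw [hg]
      simp only []
      rw [dif_neg hCp]
      have hfw := freqGe_le_window hk D.1 D.2 (p.1.1 : ℕ) (p.1.2 : ℕ)
      have hd1 := Nat.div_add_mod ((p.1.1 : ℕ)) T'
      have hm1 := Nat.mod_lt ((p.1.1 : ℕ)) hT'
      have hd2 := Nat.div_add_mod ((p.1.2 : ℕ) + 1) T'
      have hm2 := Nat.mod_lt ((p.1.2 : ℕ) + 1) hT'
      have hmul : T' * (((p.1.2 : ℕ) + 1) / T') ≤ T' * ((p.1.1 : ℕ) / T') :=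
        Nat.mul_le_mul_left T' (by omega)
      have hsmall : freqGe k D.1 ((p.1.1 : ℕ) + 1) ((p.1.2 : ℕ) + 1) ≤ T' := by omega
      have hval2 : twVal k D.1 p =
          (freqGe k D.1 ((p.1.1 : ℕ) + 1) ((p.1.2 : ℕ) + 1) : ℝ) := rfl
      rw [hval2, zero_sub, abs_neg, abs_of_nonneg (Nat.cast_nonneg _)]
      have : (freqGe k D.1 ((p.1.1 : ℕ) + 1) ((p.1.2 : ℕ) + 1) : ℝ) ≤ (T' : ℝ) := by
        exact_mod_cast hsmall
      linarith
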